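/- Let σ₀, σ₁ be distinct density matrices with Holevo-Helstrom measurement {E₀, E₁}, let μ be a probability measure on X × {σ₀, σ₁}, and let ν be the distribution on X × {0,1} obtained by measuring the label state with {E₀,E₁}. For g : X → {0,1} and h(x) = σ_{g(x)}, the 0-1 risks satisfy R̃_ν(g) = (‖σ₀−σ₁‖₁/2)·P_{(x,ρ)∼μ}[h(x) ≠ ρ] + tr[σ₀E₁] + (tr[σ₁E₀] − tr[σ₀E₁])·E_{μ₁}[g], where μ₁ is the first marginal of μ. -/

import Mathlib

open Matrix
open scoped Matrix ComplexOrder Classical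

noncomputable def psqrt {ι : Type*} [Fintype ι] [DecidableEq ι] (A : Matrix ι ι ℂ) : Matrix ι ι ℂ :=
  if h : A.PosSemidef then
    (h.1.eigenvectorUnitary : Matrix ι ι ℂ) *
      Matrix.diagonal (((↑) : ℝ → ℂ) ∘ Real.sqrt ∘ h.1.eigenvalues) *
      (star (h.1.eigenvectorUnitary : Matrix ι ι ℂ))
  else 0

noncomputable def traceNorm {ι : Type*} [Fintype ι] [DecidableEq ι] (A : Matrix ι ι ℂ) : ℝ :=
  (psqrt (Aᴴ * A)).trace.re

noncomputable def helstromProj {ι : Type*} [Fintype ι] [DecidableEq ι] (A : Matrix ι ι ℂ) : Matrix ι ι ℂ :=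
  if h : A.IsHermitian then
    (h.eigenvectorUnitary : Matrix ι ι ℂ) *
      Matrix.diagonal (fun i => if 0 ≤ h.eigenvalues i then (1:ℂ) else 0) *
      (star (h.eigenvectorUnitary : Matrix ι ι ℂ))
  else 0


lemma trace_conj_unitary {m : ℕ} (U : Matrix.unitaryGroup (Fin m) ℂ)
    (B : Matrix (Fin m) (Fin m) ℂ) :
    ((U : Matrix (Fin m) (Fin m) ℂ) * B * star (U : Matrix (Fin m) (Fin m) ℂ)).trace = B.trace := by
  rw [Matrix.trace_mul_cycle, Matrix.mem_unitaryGroup_iff'.mp U.2, one_mul]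

lemma conj_mul_conj {m : ℕ} {U : Matrix (Fin m) (Fin m) ℂ} (hUU : star U * U = 1)
    (P Q : Matrix (Fin m) (Fin m) ℂ) :
    (U * P * star U) * (U * Q * star U) = U * (P * Q) * star U := by
  simp only [mul_assoc]
  rw [← mul_assoc (star U) U, hUU, one_mul]

lemma key {m : ℕ} (A : Matrix (Fin m) (Fin m) ℂ) (hA : A.IsHermitian) (htr : A.trace = 0) :
    (A * helstromProj A).trace.re = traceNorm A / 2 := by
  set U : Matrix (Fin m) (Fin m) ℂ := (hA.eigenvectorUnitary : Matrix (Fin m) (Fin m) ℂ) with hU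
  set lam := hA.eigenvalues with hlam
  have hspec : A = U * Matrix.diagonal (RCLike.ofReal ∘ lam) * star U := hA.spectral_theorem
  have hUU : star U * U = 1 := Matrix.mem_unitaryGroup_iff'.mp hA.eigenvectorUnitary.2
  have hprod : A * helstromProj A
      = U * Matrix.diagonal (fun i => (lam i : ℂ) * (if 0 ≤ lam i then (1:ℂ) else 0)) * star U := by
    rw [helstromProj, dif_pos hA, ← hU, ← hlam]
    conv_lhs => rw [hspec]
    rw [conj_mul_conj hUU, Matrix.diagonal_mul_diagonal]
    rfl
  have h1 : (A * helstromProj A).trace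
      = ∑ i, (lam i : ℂ) * (if 0 ≤ lam i then (1:ℂ) else 0) := by
    rw [hprod, trace_conj_unitary hA.eigenvectorUnitary, Matrix.trace_diagonal]
  have h2 : ∑ i, lam i = 0 := by
    have h2' : A.trace = ∑ i, (lam i : ℂ) := by
      conv_lhs => rw [hspec]
      rw [trace_conj_unitary hA.eigenvectorUnitary, Matrix.trace_diagonal]
      simp [Function.comp]
    rw [h2'] at htr
    exact_mod_cast htr
  have hAA : Aᴴ * A = U * Matrix.diagonal (fun i => ((lam i : ℂ))^2) * star U := by
    conv_lhs => rw [hA.eq, hspec]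
    rw [conj_mul_conj hUU, Matrix.diagonal_mul_diagonal]
    congr 1
    congr 1
    ext i
    simp [sq]
  have hpsd : (Aᴴ * A).PosSemidef := Matrix.posSemidef_conjTranspose_mul_self A
  set B : Matrix (Fin m) (Fin m) ℂ :=
    U * Matrix.diagonal (fun i => (Complex.ofReal |lam i|)) * star U with hB
  have hBpsd : B.PosSemidef := by
    have hd : (Matrix.diagonal (fun i => (Complex.ofReal |lam i|))).PosSemidef := by
      refine Matrix.posSemidef_diagonal_iff.mpr fun i => ?_
      exact_mod_cast Complex.zero_le_real.mpr (abs_nonneg _)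
    have := hd.mul_mul_conjTranspose_same U
    simpa [Matrix.star_eq_conjTranspose, hB] using this
  have hB2 : B ^ 2 = Aᴴ * A := by
    rw [hAA, hB, sq, conj_mul_conj hUU, Matrix.diagonal_mul_diagonal]
    have hfun : (fun i => (Complex.ofReal |lam i|) * Complex.ofReal |lam i|)
        = fun i => ((lam i : ℂ))^2 := by
      funext i
      rw [← Complex.ofReal_mul, ← abs_mul, abs_mul_self]
      push_cast
      ring
    rw [hfun]
  have hsqrt : psqrt (Aᴴ * A) = B := by
    have hAsq : Aᴴ * A = A ^ 2 := by rw [hA.eq, sq]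
    have e1 : psqrt (Aᴴ * A) = cfc Real.sqrt (Aᴴ * A) := by
      rw [psqrt, dif_pos hpsd, hpsd.1.cfc_eq, IsHermitian.cfc, Unitary.conjStarAlgAut_apply]; rfl
    rw [e1, hAsq, ← cfc_pow_id (R := ℝ) A 2 hA.isSelfAdjoint,
      ← cfc_comp _ _ A hA.isSelfAdjoint]
    have hsa : (Real.sqrt ∘ (fun x : ℝ => x ^ 2)) = abs := by
      funext x; exact Real.sqrt_sq_eq_abs x
    rw [hsa, hA.cfc_eq, IsHermitian.cfc, Unitary.conjStarAlgAut_apply, hB]; rfl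
  have h3 : traceNorm A = ∑ i, |lam i| := by
    rw [traceNorm, hsqrt, hB, trace_conj_unitary hA.eigenvectorUnitary, Matrix.trace_diagonal]
    simp [Complex.re_sum]
  rw [h1, h3, Complex.re_sum]
  have hre : ∀ i, ((lam i : ℂ) * (if 0 ≤ lam i then (1:ℂ) else 0)).re
      = (lam i + |lam i|) / 2 := by
    intro i
    by_cases h : 0 ≤ lam i
    · simp [h, abs_of_nonneg h]
      try ring
    · simp [h, abs_of_neg (lt_of_not_ge h)]
  simp_rw [hre]
  rw [← Finset.sum_div, Finset.sum_add_distrib, h2, zero_add]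

/-- risk identity for the Holevo-Helstrom strategy.  Labels are encoded as
Booleans (b = true ↔ label state σ₁); μ is a distribution on X × {σ₀,σ₁} given by a
probability mass function on X × Bool, ν(y|x,b) = tr[σ_b E_y], and h(x) = σ_{g(x)}.
Then R̃_ν(g) = (‖σ₀−σ₁‖₁/2)·P_μ[h(x) ≠ ρ] + tr[σ₀E₁] + (tr[σ₁E₀]−tr[σ₀E₁])·E_{μ₁}[g]. -/
theorem stmt16 {n : ℕ} {X : Type*} [Fintype X]
    (σ₀ σ₁ : Matrix (Fin n) (Fin n) ℂ)
    (h₀ : σ₀.PosSemidef) (h₁ : σ₁.PosSemidef)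
    (t₀ : σ₀.trace = 1) (t₁ : σ₁.trace = 1) (hne : σ₀ ≠ σ₁)
    (E₀ E₁ : Matrix (Fin n) (Fin n) ℂ)
    (hE₀ : E₀ = helstromProj (σ₀ - σ₁)) (hE₁ : E₁ = 1 - E₀)
    (μ : X × Bool → ℝ) (hμ : ∀ p, 0 ≤ μ p) (hμ1 : ∑ p, μ p = 1)
    (g : X → Bool) :
    (∑ p : X × Bool, μ p *
        (((if p.2 then σ₁ else σ₀) * (if g p.1 then E₀ else E₁)).trace).re)
    = (traceNorm (σ₀ - σ₁) / 2) * (∑ p : X × Bool, μ p * (if g p.1 ≠ p.2 then 1 else 0))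
      + ((σ₀ * E₁).trace).re
      + (((σ₁ * E₀).trace).re - ((σ₀ * E₁).trace).re)
        * (∑ p : X × Bool, μ p * (if g p.1 then 1 else 0)) := by
  set A := σ₀ - σ₁ with hAdef
  have hA : A.IsHermitian := h₀.1.sub h₁.1
  have htrA : A.trace = 0 := by rw [hAdef, Matrix.trace_sub, t₀, t₁, sub_self]
  have hkey : ((σ₀ - σ₁) * E₀).trace.re = traceNorm (σ₀ - σ₁) / 2 := by
    rw [hE₀]; exact key A hA htrA
  set c := traceNorm (σ₀ - σ₁) / 2 with hc
  set a := ((σ₀ * E₁).trace).re with ha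
  set b := ((σ₁ * E₀).trace).re with hb
  have k1 : ((σ₀ * E₀).trace).re = c + b := by
    have : ((σ₀ - σ₁) * E₀).trace = (σ₀ * E₀).trace - (σ₁ * E₀).trace := by
      rw [Matrix.sub_mul, Matrix.trace_sub]
    rw [this] at hkey
    rw [Complex.sub_re] at hkey
    rw [hb, hc]
    linarith
  have k2 : ((σ₁ * E₁).trace).re = c + a := by
    have h' : ((σ₁ - σ₀) * E₁).trace = ((σ₀ - σ₁) * E₀).trace := by
      rw [hE₁, Matrix.mul_sub, Matrix.mul_one, Matrix.trace_sub, Matrix.trace_sub,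
        Matrix.sub_mul, Matrix.trace_sub, Matrix.sub_mul, Matrix.trace_sub, t₀, t₁]
      ring
    have h'' : ((σ₁ * E₁).trace).re - ((σ₀ * E₁).trace).re = c := by
      have : ((σ₁ - σ₀) * E₁).trace = (σ₁ * E₁).trace - (σ₀ * E₁).trace := by
        rw [Matrix.sub_mul, Matrix.trace_sub]
      rw [this] at h'
      have := congrArg Complex.re h'
      rw [Complex.sub_re] at this
      rw [this, hkey]
    rw [ha, hc]
    linarith
  have hsum : ∀ p : X × Bool,
      μ p * (((if p.2 then σ₁ else σ₀) * (if g p.1 then E₀ else E₁)).trace).re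
      = c * (μ p * (if g p.1 ≠ p.2 then 1 else 0)) + μ p * a
        + (b - a) * (μ p * (if g p.1 then 1 else 0)) := by
    intro p
    rcases hgp : g p.1 with _ | _ <;> rcases hp2 : p.2 with _ | _ <;>
      simp only [hgp, hp2, if_true, if_false, ne_eq, Bool.false_eq_true, not_false_eq_true,
        Bool.true_eq_false, not_true_eq_false, ite_true, ite_false, mul_one, mul_zero]
    · ring
    · rw [k2]; ring
    · rw [k1]; ring
    · ring
  calc (∑ p : X × Bool, μ p *
        (((if p.2 then σ₁ else σ₀) * (if g p.1 then E₀ else E₁)).trace).re)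
      = ∑ p : X × Bool, (c * (μ p * (if g p.1 ≠ p.2 then 1 else 0)) + μ p * a
          + (b - a) * (μ p * (if g p.1 then 1 else 0))) :=
        Finset.sum_congr rfl fun p _ => hsum p
    _ = _ := by
        rw [Finset.sum_add_distrib, Finset.sum_add_distrib, ← Finset.mul_sum, ← Finset.mul_sum,
          ← Finset.sum_mul, hμ1, one_mul]
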